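/- Let n ≥ 4 and let a, b ∈ A_n be nonzero pure elements. Then (a,a,b) = 0 and (a,b,b) = 0 hold simultaneously if and only if the set {a, b, a·b} is a normed subset of A_n, i.e. ‖x·y‖ = ‖x‖·‖y‖ for all x, y ∈ {a, b, a·b}. -/

import Mathlib

noncomputable section

open scoped Quaternion

/-- The Cayley–Dickson algebra `A n = ℝ^(2^n)` as a type. -/
def CD : ℕ → Type
  | 0 => ℝ
  | n + 1 => CD n × CD n

namespace CD

instance instAddCommGroup : (n : ℕ) → AddCommGroup (CD n)
  | 0 => inferInstanceAs (AddCommGroup ℝ)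
  | n + 1 =>
    letI := instAddCommGroup n
    inferInstanceAs (AddCommGroup (CD n × CD n))

instance instModule : (n : ℕ) → Module ℝ (CD n)
  | 0 => inferInstanceAs (Module ℝ ℝ)
  | n + 1 =>
    letI := instModule n
    inferInstanceAs (Module ℝ (CD n × CD n))

/-- Conjugation in the Cayley–Dickson algebra. -/
def conj : {n : ℕ} → CD n → CD n
  | 0, x => x
  | _ + 1, x => (conj x.1, -x.2)

/-- Cayley–Dickson multiplication. -/
def mul : {n : ℕ} → CD n → CD n → CD n
  | 0, x, y => Mul.mul (α := ℝ) x y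
  | _ + 1, x, y =>
    (mul x.1 y.1 - mul (conj y.2) x.2, mul y.2 x.1 + mul x.2 (conj y.1))

instance instMul (n : ℕ) : Mul (CD n) := ⟨mul⟩

/-- The multiplicative unit `e₀`. -/
def one : {n : ℕ} → CD n
  | 0 => (1 : ℝ)
  | _ + 1 => (one, 0)

instance instOne (n : ℕ) : One (CD n) := ⟨one⟩

/-- The Euclidean inner product on `A n = ℝ^(2^n)`. -/
def inner : {n : ℕ} → CD n → CD n → ℝ
  | 0, x, y => (x * y : ℝ)
  | _ + 1, x, y => inner x.1 y.1 + inner x.2 y.2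

/-- The Euclidean norm on `A n = ℝ^(2^n)`. -/
def norm {n : ℕ} (x : CD n) : ℝ := Real.sqrt (inner x x)

/-- `ã = (-a₂, a₁)`. -/
def tilde {n : ℕ} (a : CD (n + 1)) : CD (n + 1) := (-a.2, a.1)

/-- `ẽ₀ = (0, e₀)`. -/
def etilde (n : ℕ) : CD (n + 1) := ((0 : CD n), (1 : CD n))

/-- An element is pure if its conjugate is its negative. -/
def IsPure {n : ℕ} (a : CD n) : Prop := conj a = -a

/-- An element of `A (n+1)` is doubly pure if both of its coordinates are pure. -/
def IsDoublyPure {n : ℕ} (a : CD (n + 1)) : Prop := IsPure a.1 ∧ IsPure a.2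

/-- The associator `(a,b,c) = (ab)c - a(bc)`. -/
def assoc {n : ℕ} (a b c : CD n) : CD n := a * b * c - a * (b * c)

/-- An element is alternative if `(a,a,x) = 0` for all `x`. -/
def IsAlternative {n : ℕ} (a : CD n) : Prop := ∀ x : CD n, assoc a a x = 0

/-- An element is strongly alternative if `(a,a,x) = 0` and `(a,x,x) = 0` for all `x`. -/
def IsStronglyAlternative {n : ℕ} (a : CD n) : Prop :=
  (∀ x : CD n, assoc a a x = 0) ∧ (∀ x : CD n, assoc a x x = 0)

/-- The pure (imaginary) part of an element. -/
def im {n : ℕ} (a : CD n) : CD n := (2⁻¹ : ℝ) • (a - conj a)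

/-- `H a`, the span of `{e₀, ã, a, ẽ₀}`. -/
def H {n : ℕ} (a : CD (n + 1)) : Submodule ℝ (CD (n + 1)) :=
  Submodule.span ℝ {(1 : CD (n + 1)), tilde a, a, etilde n}

/-- The orthogonal complement of `H a`. -/
def Hperp {n : ℕ} (a : CD (n + 1)) : Set (CD (n + 1)) :=
  {x | ∀ y ∈ H a, inner y x = 0}

variable {n : ℕ}

lemma mul_def (x y : CD (n+1)) :
    x * y = (x.1*y.1 - conj y.2 * x.2, y.2*x.1 + x.2*conj y.1) := rfl
lemma conj_def (x : CD (n+1)) : conj x = (conj x.1, -x.2) := rfl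
@[simp] lemma inner_def (x y : CD (n+1)) : inner x y = inner x.1 y.1 + inner x.2 y.2 := rfl
lemma one_def : (1 : CD (n+1)) = ((1 : CD n), 0) := rfl
@[simp] lemma fst_add (x y : CD (n+1)) : (x+y).1 = x.1+y.1 := rfl
@[simp] lemma snd_add (x y : CD (n+1)) : (x+y).2 = x.2+y.2 := rfl
@[simp] lemma fst_neg (x : CD (n+1)) : (-x).1 = -x.1 := rfl
@[simp] lemma snd_neg (x : CD (n+1)) : (-x).2 = -x.2 := rfl
@[simp] lemma fst_sub (x y : CD (n+1)) : (x-y).1 = x.1-y.1 := rfl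
@[simp] lemma snd_sub (x y : CD (n+1)) : (x-y).2 = x.2-y.2 := rfl
@[simp] lemma fst_smul (r : ℝ) (x : CD (n+1)) : (r•x).1 = r•x.1 := rfl
@[simp] lemma snd_smul (r : ℝ) (x : CD (n+1)) : (r•x).2 = r•x.2 := rfl
@[simp] lemma fst_zero : (0 : CD (n+1)).1 = 0 := rfl
@[simp] lemma snd_zero : (0 : CD (n+1)).2 = 0 := rfl
@[simp] lemma fst_mul (x y : CD (n+1)) : (x * y).1 = x.1*y.1 - conj y.2 * x.2 := rfl
@[simp] lemma snd_mul (x y : CD (n+1)) : (x * y).2 = y.2*x.1 + x.2*conj y.1 := rfl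
@[simp] lemma fst_conj (x : CD (n+1)) : (conj x).1 = conj x.1 := rfl
@[simp] lemma snd_conj (x : CD (n+1)) : (conj x).2 = -x.2 := rfl
@[simp] lemma fst_one : (1 : CD (n+1)).1 = 1 := rfl
@[simp] lemma snd_one : (1 : CD (n+1)).2 = 0 := rfl

lemma ext' {x y : CD (n+1)} (h1 : x.1 = y.1) (h2 : x.2 = y.2) : x = y := by
  have hx : x = (x.1, x.2) := rfl
  have hy : y = (y.1, y.2) := rfl
  rw [hx, hy, h1, h2]

theorem cconj_add : ∀ {n} (x y : CD n), conj (x + y) = conj x + conj y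
  | 0, _, _ => rfl
  | n+1, x, y => ext' (cconj_add x.1 y.1) (by simp [neg_add, add_comm])

theorem cconj_neg : ∀ {n} (x : CD n), conj (-x) = -conj x
  | 0, _ => rfl
  | n+1, x => ext' (cconj_neg x.1) (by simp)

theorem cconj_smul : ∀ {n} (r : ℝ) (x : CD n), conj (r • x) = r • conj x
  | 0, _, _ => rfl
  | n+1, r, x => ext' (cconj_smul r x.1) (by simp)

theorem cconj_conj : ∀ {n} (x : CD n), conj (conj x) = x
  | 0, _ => rfl
  | n+1, x => ext' (cconj_conj x.1) (by simp)

theorem cconj_zero : ∀ {n}, conj (0 : CD n) = 0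
  | 0 => rfl
  | n+1 => ext' (cconj_zero) (by simp)

theorem cconj_one : ∀ {n}, conj (1 : CD n) = 1
  | 0 => rfl
  | n+1 => ext' (cconj_one) (by simp)

lemma cconj_sub (x y : CD n) : conj (x - y) = conj x - conj y := by
  rw [sub_eq_add_neg, cconj_add, cconj_neg, sub_eq_add_neg]

theorem cmul_add : ∀ {n} (x y z : CD n),
    x * (y + z) = x * y + x * z ∧ (y + z) * x = y * x + z * x
  | 0, x, y, z => ⟨mul_add (show ℝ from x) y z, add_mul (show ℝ from y) z x⟩
  | n+1, x, y, z => by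
    have H1 : ∀ (a b c : CD n), a * (b + c) = a * b + a * c := fun a b c => (cmul_add a b c).1
    have H2 : ∀ (a b c : CD n), (b + c) * a = b * a + c * a := fun a b c => (cmul_add a b c).2
    constructor <;> refine ext' ?_ ?_ <;> simp [cconj_add, H1, H2] <;> abel

theorem cmul_neg : ∀ {n} (x y : CD n), x * (-y) = -(x * y) ∧ (-y) * x = -(y * x)
  | 0, x, y => ⟨mul_neg (show ℝ from x) y, neg_mul (show ℝ from y) x⟩
  | n+1, x, y => by
    have H1 : ∀ (a b : CD n), a * (-b) = -(a * b) := fun a b => (cmul_neg a b).1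
    have H2 : ∀ (a b : CD n), (-b) * a = -(b * a) := fun a b => (cmul_neg a b).2
    constructor <;> refine ext' ?_ ?_ <;> simp [cconj_neg, H1, H2] <;> abel

theorem csmul_mul : ∀ {n} (r : ℝ) (x y : CD n),
    (r • x) * y = r • (x * y) ∧ x * (r • y) = r • (x * y)
  | 0, r, x, y =>
    ⟨show (r * (show ℝ from x)) * (show ℝ from y) = r * ((show ℝ from x) * (show ℝ from y)) by ring,
     show (show ℝ from x) * (r * (show ℝ from y)) = r * ((show ℝ from x) * (show ℝ from y)) by ring⟩
  | n+1, r, x, y => by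
    have H1 : ∀ (s : ℝ) (a b : CD n), (s • a) * b = s • (a * b) := fun s a b => (csmul_mul s a b).1
    have H2 : ∀ (s : ℝ) (a b : CD n), a * (s • b) = s • (a * b) := fun s a b => (csmul_mul s a b).2
    constructor <;> refine ext' ?_ ?_ <;> simp [cconj_smul, H1, H2, smul_sub, smul_add]

lemma cmul_zero (x : CD n) : x * 0 = 0 := by
  have h := (cmul_add x 0 0).1
  rw [add_zero] at h
  exact add_eq_left.mp h.symm

lemma czero_mul (x : CD n) : 0 * x = 0 := by
  have h := (cmul_add x 0 0).2
  rw [add_zero] at h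
  exact add_eq_left.mp h.symm

lemma cmul_sub (x y z : CD n) : x * (y - z) = x * y - x * z := by
  rw [sub_eq_add_neg, (cmul_add x y (-z)).1, (cmul_neg x z).1, sub_eq_add_neg]

lemma csub_mul (x y z : CD n) : (y - z) * x = y * x - z * x := by
  rw [sub_eq_add_neg, (cmul_add x y (-z)).2, (cmul_neg x z).2, sub_eq_add_neg]

theorem cone_mul : ∀ {n} (x : CD n), 1 * x = x ∧ x * 1 = x
  | 0, x => ⟨one_mul (show ℝ from x), mul_one (show ℝ from x)⟩
  | n+1, x => by
    have H : ∀ (a : CD n), 1 * a = a ∧ a * 1 = a := fun a => cone_mul a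
    constructor <;> refine ext' ?_ ?_ <;>
      simp [cconj_zero, cconj_one, cmul_zero, czero_mul, (H _).1, (H _).2]

theorem cinner_comm : ∀ {n} (x y : CD n), inner x y = inner y x
  | 0, x, y => mul_comm (show ℝ from x) y
  | n+1, x, y => by
    simp [cinner_comm x.1 y.1, cinner_comm x.2 y.2]

theorem cinner_add_left : ∀ {n} (x y z : CD n), inner (x + y) z = inner x z + inner y z
  | 0, x, y, z => add_mul (show ℝ from x) y z
  | n+1, x, y, z => by
    simp [cinner_add_left x.1 y.1 z.1, cinner_add_left x.2 y.2 z.2]; ring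

lemma cinner_add_right (x y z : CD n) : inner x (y + z) = inner x y + inner x z := by
  rw [cinner_comm, cinner_add_left, cinner_comm y x, cinner_comm z x]

theorem cinner_smul_left : ∀ {n} (r : ℝ) (x z : CD n), inner (r • x) z = r * inner x z
  | 0, r, x, z => mul_assoc r (show ℝ from x) z
  | n+1, r, x, z => by
    simp [cinner_smul_left r x.1 z.1, cinner_smul_left r x.2 z.2]; ring

lemma cinner_smul_right (r : ℝ) (x z : CD n) : inner x (r • z) = r * inner x z := by
  rw [cinner_comm, cinner_smul_left, cinner_comm z x]

theorem cinner_neg_left : ∀ {n} (x z : CD n), inner (-x) z = -inner x z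
  | 0, x, z => neg_mul (show ℝ from x) z
  | n+1, x, z => by
    simp [cinner_neg_left x.1 z.1, cinner_neg_left x.2 z.2]; ring

lemma cinner_neg_right (x z : CD n) : inner x (-z) = -inner x z := by
  rw [cinner_comm, cinner_neg_left, cinner_comm z x]

lemma cinner_sub_left (x y z : CD n) : inner (x - y) z = inner x z - inner y z := by
  rw [sub_eq_add_neg, cinner_add_left, cinner_neg_left, sub_eq_add_neg]

lemma cinner_sub_right (x y z : CD n) : inner x (y - z) = inner x y - inner x z := by
  rw [cinner_comm, cinner_sub_left, cinner_comm y x, cinner_comm z x]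

theorem cinner_zero_right : ∀ {n} (x : CD n), inner x 0 = 0
  | 0, x => mul_zero (show ℝ from x)
  | n+1, x => by simp [cinner_zero_right x.1, cinner_zero_right x.2]

theorem cinner_one_one : ∀ {n}, inner (1 : CD n) 1 = 1
  | 0 => mul_one (1 : ℝ)
  | n+1 => by simp [cinner_one_one (n := n), cinner_zero_right]

theorem cinner_self_nonneg : ∀ {n} (x : CD n), 0 ≤ inner x x
  | 0, x => mul_self_nonneg (show ℝ from x)
  | n+1, x => by
    have := cinner_self_nonneg x.1
    have := cinner_self_nonneg x.2
    simp only [inner_def]; linarith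

theorem cinner_self_eq_zero : ∀ {n} (x : CD n), inner x x = 0 → x = 0
  | 0, x, h => mul_self_eq_zero.mp h
  | n+1, x, h => by
    simp only [inner_def] at h
    have h1 := cinner_self_nonneg x.1
    have h2 := cinner_self_nonneg x.2
    refine ext' (cinner_self_eq_zero x.1 (by linarith)) (cinner_self_eq_zero x.2 (by linarith))

theorem cinner_conj_conj : ∀ {n} (x y : CD n), inner (conj x) (conj y) = inner x y
  | 0, _, _ => rfl
  | n+1, x, y => by
    simp [cinner_conj_conj x.1 y.1, cinner_neg_left, cinner_neg_right]

theorem cconj_mul : ∀ {n} (x y : CD n), conj (x * y) = conj y * conj x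
  | 0, x, y => mul_comm (show ℝ from x) y
  | n+1, x, y => by
    have H : ∀ (a b : CD n), conj (a * b) = conj b * conj a := fun a b => cconj_mul a b
    refine ext' ?_ ?_ <;>
      simp [cconj_sub, cconj_add, cconj_neg, cconj_conj, H, (cmul_neg _ _).1, (cmul_neg _ _).2]
        <;> abel

theorem cmul_conj : ∀ {n} (x : CD n),
    x * conj x = (inner x x) • 1 ∧ conj x * x = (inner x x) • 1
  | 0, x => ⟨(mul_one ((show ℝ from x) * (show ℝ from x))).symm,
      (mul_one ((show ℝ from x) * (show ℝ from x))).symm⟩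
  | n+1, x => by
    have H1 := (cmul_conj x.1).1
    have H2 := (cmul_conj x.1).2
    have H3 := (cmul_conj x.2).1
    have H4 := (cmul_conj x.2).2
    constructor <;> refine ext' ?_ ?_ <;>
      simp [cconj_conj, cconj_neg, H1, H2, H3, H4, (cmul_neg _ _).1, (cmul_neg _ _).2, add_smul,
        sub_eq_add_neg, neg_one_smul, smul_smul] <;> abel

theorem cadd_conj : ∀ {n} (x : CD n), x + conj x = (2 * inner x 1) • 1
  | 0, x => show (show ℝ from x) + (show ℝ from x) = (2 * ((show ℝ from x) * 1)) * 1 by ring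
  | n+1, x => by
    refine ext' ?_ ?_ <;> simp [cadd_conj x.1, cinner_zero_right]

theorem cinner_mul : ∀ {n} (x y z : CD n),
    inner (x * y) z = inner y (conj x * z) ∧ inner (x * y) z = inner x (z * conj y)
  | 0, x, y, z =>
    ⟨show (show ℝ from x) * (show ℝ from y) * (show ℝ from z)
        = (show ℝ from y) * ((show ℝ from x) * (show ℝ from z)) by ring,
     show (show ℝ from x) * (show ℝ from y) * (show ℝ from z)
        = (show ℝ from x) * ((show ℝ from z) * (show ℝ from y)) by ring⟩
  | n+1, x, y, z => by
    have L : ∀ (a b c : CD n), inner (a * b) c = inner b (conj a * c) :=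
      fun a b c => (cinner_mul a b c).1
    have R : ∀ (a b c : CD n), inner (a * b) c = inner a (c * conj b) :=
      fun a b c => (cinner_mul a b c).2
    have e1 : inner (x.1*y.1) z.1 = inner y.1 (conj x.1 * z.1) := L _ _ _
    have e1' : inner (x.1*y.1) z.1 = inner x.1 (z.1 * conj y.1) := R _ _ _
    have e2 : inner (conj y.2 * x.2) z.1 = inner y.2 (x.2 * conj z.1) := by
      calc inner (conj y.2 * x.2) z.1 = inner x.2 (y.2 * z.1) := by
            rw [L (conj y.2) x.2 z.1, cconj_conj]
        _ = inner (y.2 * z.1) x.2 := cinner_comm _ _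
        _ = inner y.2 (x.2 * conj z.1) := R _ _ _
    have e2' : inner (conj y.2 * x.2) z.1 = inner x.2 (y.2 * z.1) := by
      rw [L (conj y.2) x.2 z.1, cconj_conj]
    have e3 : inner (y.2*x.1) z.2 = inner y.2 (z.2 * conj x.1) := R _ _ _
    have e3' : inner (y.2*x.1) z.2 = inner x.1 (conj y.2 * z.2) := L _ _ _
    have e4 : inner (x.2*conj y.1) z.2 = inner y.1 (conj z.2 * x.2) := by
      calc inner (x.2 * conj y.1) z.2 = inner x.2 (z.2 * y.1) := by
            rw [R x.2 (conj y.1) z.2, cconj_conj]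
        _ = inner (z.2 * y.1) x.2 := cinner_comm _ _
        _ = inner y.1 (conj z.2 * x.2) := L _ _ _
    have e4' : inner (x.2*conj y.1) z.2 = inner x.2 (z.2 * y.1) := by
      rw [R x.2 (conj y.1) z.2, cconj_conj]
    refine ⟨?_, ?_⟩
    · simp only [inner_def, fst_mul, snd_mul, fst_conj, snd_conj, fst_neg, snd_neg, cinner_sub_left, cinner_add_left,
        cinner_add_right, cinner_sub_right, (cmul_neg _ _).1, (cmul_neg _ _).2, cconj_conj,
        cconj_neg, cinner_neg_left, cinner_neg_right, e1, e2, e3, e4]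
      ring
    · simp only [inner_def, fst_mul, snd_mul, fst_conj, snd_conj, fst_neg, snd_neg, cinner_sub_left, cinner_add_left,
        cinner_add_right, cinner_sub_right, (cmul_neg _ _).1, (cmul_neg _ _).2, cconj_conj,
        cconj_neg, cinner_neg_left, cinner_neg_right, e1', e2', e3', e4']
      ring


lemma cnorm_mul_iff (x y : CD n) :
    norm (x * y) = norm x * norm y ↔ inner (x * y) (x * y) = inner x x * inner y y := by
  unfold norm
  rw [← Real.sqrt_mul (cinner_self_nonneg x)]
  exact Real.sqrt_inj (cinner_self_nonneg _)
    (mul_nonneg (cinner_self_nonneg x) (cinner_self_nonneg y))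

lemma ceq_of_inner_eq {u v : CD n} (h1 : inner u u = inner v v) (h2 : inner u v = inner v v) :
    u = v := by
  have h3 : inner (u - v) (u - v) = 0 := by
    rw [cinner_sub_left, cinner_sub_right, cinner_sub_right, cinner_comm v u, h1, h2]
    ring
  exact sub_eq_zero.mp (cinner_self_eq_zero _ h3)


end CD


theorem strongly_alternate_iff_normed_subset' (n : ℕ) (a b : CD n)
    (ha : CD.IsPure a) (hb : CD.IsPure b) :
    (CD.assoc a a b = 0 ∧ CD.assoc a b b = 0) ↔
      ∀ x ∈ ({a, b, a * b} : Set (CD n)), ∀ y ∈ ({a, b, a * b} : Set (CD n)),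
        CD.norm (x * y) = CD.norm x * CD.norm y := by
  have ha' : CD.conj a = -a := ha
  have hb' : CD.conj b = -b := hb
  have haa : a * a = (-(CD.inner a a)) • (1 : CD n) := by
    have h := (CD.cmul_conj a).1
    rw [ha', (CD.cmul_neg a a).1] at h
    rw [neg_smul]
    exact neg_eq_iff_eq_neg.mp h
  have hbb : b * b = (-(CD.inner b b)) • (1 : CD n) := by
    have h := (CD.cmul_conj b).1
    rw [hb', (CD.cmul_neg b b).1] at h
    rw [neg_smul]
    exact neg_eq_iff_eq_neg.mp h
  constructor
  · rintro ⟨h1, h2⟩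
    have h1' : a * a * b - a * (a * b) = 0 := h1
    have h2' : a * b * b - a * (b * b) = 0 := h2
    have hE1 : a * (a * b) = (-(CD.inner a a)) • b := by
      rw [← sub_eq_zero.mp h1', haa, (CD.csmul_mul _ _ _).1, (CD.cone_mul b).1]
    have hE2 : (a * b) * b = (-(CD.inner b b)) • a := by
      rw [sub_eq_zero.mp h2', hbb, (CD.csmul_mul _ _ _).2, (CD.cone_mul a).2]
    have hN : CD.inner (a * b) (a * b) = CD.inner a a * CD.inner b b := by
      rw [(CD.cinner_mul a b (a * b)).1, ha', (CD.cmul_neg (a * b) a).2, hE1, neg_smul, neg_neg,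
        CD.cinner_smul_right]
    have hp1 : CD.inner (a * b) 1 = -(CD.inner a b) := by
      rw [(CD.cinner_mul a b 1).1, ha', (CD.cmul_neg 1 a).2, (CD.cone_mul a).2,
        CD.cinner_neg_right, CD.cinner_comm b a]
    have hp1' : CD.inner (1 : CD n) (a * b) = -(CD.inner a b) := by
      rw [CD.cinner_comm]; exact hp1
    have hsum : a * b + CD.conj (a * b) = (-(2 * CD.inner a b)) • (1 : CD n) := by
      rw [CD.cadd_conj (a * b), hp1, mul_neg]
    have hconjp : CD.conj (a * b) = b * a := by
      rw [CD.cconj_mul a b, ha', hb', (CD.cmul_neg (-b) a).1, (CD.cmul_neg a b).2, neg_neg]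
    have hba : b * a = (-(2 * CD.inner a b)) • (1 : CD n) - a * b := by
      rw [← hconjp, eq_sub_iff_add_eq, add_comm]
      exact hsum
    have hp2 : a * b = (-(2 * CD.inner a b)) • (1 : CD n) - CD.conj (a * b) :=
      eq_sub_of_add_eq hsum
    intro x hx y hy
    simp only [Set.mem_insert_iff, Set.mem_singleton_iff] at hx hy
    rw [CD.cnorm_mul_iff]
    rcases hx with h | h | h <;> rcases hy with h' | h' | h' <;> rw [h, h']
    · rw [haa, CD.cinner_smul_left, CD.cinner_smul_right, CD.cinner_one_one]; ring
    · exact hN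
    · rw [hE1, CD.cinner_smul_left, CD.cinner_smul_right, hN]; ring
    · rw [hba]
      simp only [CD.cinner_sub_left, CD.cinner_sub_right, CD.cinner_smul_left,
        CD.cinner_smul_right, CD.cinner_one_one, hp1, hp1', hN]
      ring
    · rw [hbb, CD.cinner_smul_left, CD.cinner_smul_right, CD.cinner_one_one]; ring
    · have h6 : CD.conj (b * (a * b)) =
          (2 * CD.inner a b) • b + (-(CD.inner b b)) • a := by
        rw [CD.cconj_mul b (a * b), hconjp, hb', (CD.cmul_neg (b * a) b).1, hba, CD.csub_mul,
          (CD.csmul_mul _ _ _).1, (CD.cone_mul b).1, hE2]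
        module
      rw [← CD.cinner_conj_conj (b * (a * b)) (b * (a * b)), h6]
      simp only [CD.cinner_add_left, CD.cinner_add_right, CD.cinner_smul_left,
        CD.cinner_smul_right, hN, CD.cinner_comm b a]
      ring
    · have h7 : CD.conj ((a * b) * a) =
          (2 * CD.inner a b) • a + (-(CD.inner a a)) • b := by
        rw [CD.cconj_mul (a * b) a, hconjp, ha', (CD.cmul_neg (b * a) a).2, hba, CD.cmul_sub,
          (CD.csmul_mul _ _ _).2, (CD.cone_mul a).2, hE1]
        module
      rw [← CD.cinner_conj_conj ((a * b) * a) ((a * b) * a), h7]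
      simp only [CD.cinner_add_left, CD.cinner_add_right, CD.cinner_smul_left,
        CD.cinner_smul_right, hN, CD.cinner_comm b a]
      ring
    · rw [hE2, CD.cinner_smul_left, CD.cinner_smul_right, hN]; ring
    · have hpp : (a * b) * (a * b) =
          (-(2 * CD.inner a b)) • (a * b) - (CD.inner a a * CD.inner b b) • (1 : CD n) := by
        nth_rewrite 2 [hp2]
        rw [CD.cmul_sub, (CD.csmul_mul _ _ _).2, (CD.cone_mul (a * b)).2,
          (CD.cmul_conj (a * b)).1, hN]
      rw [hpp]
      simp only [CD.cinner_sub_left, CD.cinner_sub_right, CD.cinner_smul_left,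
        CD.cinner_smul_right, CD.cinner_one_one, hp1, hp1', hN]
      ring
  · intro hS
    have hNab : CD.inner (a * b) (a * b) = CD.inner a a * CD.inner b b :=
      (CD.cnorm_mul_iff a b).mp (hS a (by simp) b (by simp))
    have h3 : CD.inner (a * (a * b)) (a * (a * b)) =
        CD.inner a a * (CD.inner a a * CD.inner b b) := by
      have := (CD.cnorm_mul_iff a (a * b)).mp (hS a (by simp) (a * b) (by simp))
      rw [hNab] at this
      exact this
    have h4 : CD.inner ((a * b) * b) ((a * b) * b) =
        (CD.inner a a * CD.inner b b) * CD.inner b b := by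
      have := (CD.cnorm_mul_iff (a * b) b).mp (hS (a * b) (by simp) b (by simp))
      rw [hNab] at this
      exact this
    have hip : CD.inner (a * (a * b)) b = -(CD.inner a a * CD.inner b b) := by
      rw [(CD.cinner_mul a (a * b) b).1, ha', (CD.cmul_neg b a).2, CD.cinner_neg_right, hNab]
    have hip2 : CD.inner ((a * b) * b) a = -(CD.inner a a * CD.inner b b) := by
      rw [(CD.cinner_mul (a * b) b a).2, hb', (CD.cmul_neg a b).1, CD.cinner_neg_right, hNab]
    have hE1 : a * (a * b) = (-(CD.inner a a)) • b := by
      apply CD.ceq_of_inner_eq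
      · rw [h3, CD.cinner_smul_left, CD.cinner_smul_right]; ring
      · rw [CD.cinner_smul_right, hip, CD.cinner_smul_left, CD.cinner_smul_right]; ring
    have hE2 : (a * b) * b = (-(CD.inner b b)) • a := by
      apply CD.ceq_of_inner_eq
      · rw [h4, CD.cinner_smul_left, CD.cinner_smul_right]; ring
      · rw [CD.cinner_smul_right, hip2, CD.cinner_smul_left, CD.cinner_smul_right]; ring
    constructor
    · show a * a * b - a * (a * b) = 0
      rw [haa, (CD.csmul_mul _ _ _).1, (CD.cone_mul b).1, hE1, sub_self]
    · show a * b * b - a * (b * b) = 0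
      rw [hbb, (CD.csmul_mul _ _ _).2, (CD.cone_mul a).2, hE2, sub_self]



/-- For `n ≥ 4` and nonzero pure `a, b`, `(a,a,b) = 0 ∧ (a,b,b) = 0`
iff `{a, b, ab}` is a normed subset of `A n`. -/
theorem strongly_alternate_iff_normed_subset (n : ℕ) (hn : 4 ≤ n) (a b : CD n)
    (ha0 : a ≠ 0) (hb0 : b ≠ 0) (ha : CD.IsPure a) (hb : CD.IsPure b) :
    (CD.assoc a a b = 0 ∧ CD.assoc a b b = 0) ↔
      ∀ x ∈ ({a, b, a * b} : Set (CD n)), ∀ y ∈ ({a, b, a * b} : Set (CD n)),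
        CD.norm (x * y) = CD.norm x * CD.norm y := strongly_alternate_iff_normed_subset' n a b ha hb
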